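/- There is no nontrivial regular (216, 40, 4, 8)-partial difference set in any abelian group of order 216. That is, if G is an abelian group with |G| = 216, there exists no subset D of G with |D| = 40, e ∉ D, D = {d⁻¹ : d ∈ D}, such that every non-identity g ∈ D has exactly 4 representations g = a·b⁻¹ with a, b ∈ D and every non-identity g ∉ D has exactly 8 such representations, where neither D ∪ {e} nor G \ D is a subgroup of G. -/

import Mathlib

/-- The number of representations of `g` as `a * b⁻¹` with `a, b ∈ D`. -/
def diffReps {G : Type*} [Group G] [DecidableEq G] (D : Finset G) (g : G) : ℕ :=
  ((D ×ˢ D).filter (fun p => p.1 * p.2⁻¹ = g)).card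

/-- `D` is a `(v, k, λ, μ)`-partial difference set in the finite group `G`. -/
def IsPDS {G : Type*} [Group G] [Fintype G] [DecidableEq G]
    (D : Finset G) (v k l m : ℕ) : Prop :=
  Fintype.card G = v ∧ D.card = k ∧
  ∀ g : G, g ≠ 1 →
    (g ∈ D → diffReps D g = l) ∧ (g ∉ D → diffReps D g = m)

/-- `D` is regular: it does not contain the identity and is closed under inverses. -/
def IsRegularPDS {G : Type*} [Group G] (D : Finset G) : Prop :=
  (1 : G) ∉ D ∧ ∀ d : G, d ∈ D ↔ d⁻¹ ∈ D

/-- A regular PDS `D` is trivial if `D ∪ {e}` or `G \ D` is a subgroup of `G`. -/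
def IsTrivialPDS {G : Type*} [Group G] (D : Finset G) : Prop :=
  (∃ H : Subgroup G, (H : Set G) = insert (1 : G) ↑D) ∨
  (∃ H : Subgroup G, (H : Set G) = (↑D : Set G)ᶜ)

open Finset


lemma inv_mul_invol {Q : Type*} [CommGroup Q] (c a : Q) : (a⁻¹ * c)⁻¹ * c = a := by
  rw [mul_inv_rev, inv_inv, mul_comm c⁻¹ a, mul_assoc, inv_mul_cancel, mul_one]

-- parity lemma
lemma key_parity {Q : Type*} [CommGroup Q] [Fintype Q] [DecidableEq Q]
    (hsq : Function.Injective (fun z : Q => z * z))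
    (F : Q → ℤ) (x : Q) :
    ((∑ z : Q, F z * F (z⁻¹ * (x * x)) : ℤ) : ZMod 2) = (F x : ZMod 2) * (F x : ZMod 2) := by
  have hx : x ∈ (univ : Finset Q) := mem_univ x
  rw [← Finset.insert_erase hx, Finset.sum_insert (Finset.notMem_erase x univ)]
  have h1 : x⁻¹ * (x * x) = x := inv_mul_cancel_left x x
  rw [h1]
  push_cast
  have h2 : ∑ z ∈ univ.erase x, ((F z : ZMod 2) * (F (z⁻¹ * (x * x)) : ZMod 2)) = 0 := by
    apply Finset.sum_involution (g := fun z _ => z⁻¹ * (x * x))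
    · intro a ha
      rw [inv_mul_invol, mul_comm (F (a⁻¹ * (x*x)) : ZMod 2)]
      ring_nf
      simp [CharTwo.two_eq_zero]
    · intro a ha _
      intro hcon
      have h' : x * x = a * a := by
        rw [← mul_inv_cancel_left a (x * x), hcon]
      exact (Finset.mem_erase.mp ha).1 (hsq h'.symm)
    · intro a ha
      refine Finset.mem_erase.mpr ⟨?_, mem_univ _⟩
      intro hcon
      apply (Finset.mem_erase.mp ha).1
      have : a * (a⁻¹ * (x * x)) = a * x := by rw [hcon]
      rw [mul_inv_cancel_left, mul_comm] at this
      exact mul_right_cancel this.symm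
    · intro a ha; exact inv_mul_invol _ _
  rw [h2, add_zero]

lemma claimA {Q : Type*} [CommGroup Q] [Fintype Q] [DecidableEq Q]
    (hQ : Fintype.card Q = 27) (d : Q → ℤ)
    (hsum : ∑ x : Q, d x = 40)
    (hconv : ∀ y : Q, ∑ x : Q, d x * d (x⁻¹ * y) = (if y = 1 then 32 else 0) + 64 - 4 * d y)
    (y : Q) :
    ∑ x : Q, ((fun y => 3 * d y + (if y = 1 then 6 else 0) - 4) x
      * (fun y => 3 * d y + (if y = 1 then 6 else 0) - 4) (x⁻¹ * y))
      = if y = 1 then 324 else 0 := by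
  have hshift : ∑ x : Q, d (x⁻¹ * y) = 40 := by
    rw [← hsum]
    exact Fintype.sum_equiv ((Equiv.inv Q).trans (Equiv.mulRight y)) _ _ (fun x => rfl)
  have expand : ∀ x : Q, (3 * d x + (if x = 1 then 6 else 0) - 4)
      * (3 * d (x⁻¹ * y) + (if x⁻¹ * y = 1 then 6 else 0) - 4) =
      9 * (d x * d (x⁻¹ * y))
      + (if x = y then 18 * d x else 0)
      - 12 * d x
      + (if x = 1 then 18 * d (x⁻¹ * y) else 0)
      - 12 * d (x⁻¹ * y)
      + (if x = 1 then (if x = y then (36:ℤ) else 0) else 0)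
      - (if x = 1 then (24:ℤ) else 0)
      - (if x = y then (24:ℤ) else 0)
      + 16 := by
    intro x
    have hxy : (if x⁻¹ * y = 1 then (6:ℤ) else 0) = (if x = y then 6 else 0) := by
      simp [inv_mul_eq_one]
    rw [hxy]
    by_cases h1 : x = 1 <;> by_cases h2 : x = y
    · have hy : y = 1 := by rw [← h2, h1]
      simp [h1, h2, hy]; ring
    · have hy : ¬ y = 1 := fun h => h2 (by rw [h1, h])
      have hy' : ¬ (1:Q) = y := fun h => hy h.symm
      simp [h1, h2, hy, hy']; ring
    · have hy : ¬ y = 1 := fun h => h1 (by rw [h2, h])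
      simp [h1, h2, hy]; ring
    · simp [h1, h2]; ring
  rw [Finset.sum_congr rfl (fun x _ => expand x)]
  simp only [Finset.sum_add_distrib, Finset.sum_sub_distrib]
  rw [← Finset.mul_sum, hconv y]
  rw [Finset.sum_ite_eq' univ y (fun x => 18 * d x)]
  rw [show ∑ x : Q, (12:ℤ) * d x = 12 * 40 by rw [← Finset.mul_sum, hsum]]
  rw [Finset.sum_ite_eq' univ (1:Q) (fun x => 18 * d (x⁻¹ * y))]
  rw [show ∑ x : Q, 12 * d (x⁻¹ * y) = 12 * 40 by rw [← Finset.mul_sum, hshift]]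
  rw [Finset.sum_ite_eq' univ (1:Q) (fun x => if x = y then (36:ℤ) else 0)]
  rw [Finset.sum_ite_eq' univ (1:Q) (fun _ => (24:ℤ))]
  rw [Finset.sum_ite_eq' univ y (fun _ => (24:ℤ))]
  rw [Finset.sum_const, card_univ, hQ]
  simp only [mem_univ, if_true, inv_one, one_mul]
  by_cases hy : y = 1 <;> simp [hy, eq_comm] <;> ring


section Plumbing
variable {G : Type*} [CommGroup G] [Fintype G] [DecidableEq G]

-- diffReps at a general point vs product counting
lemma prod_count_eq_diffReps (D : Finset G) (hinv : ∀ d : G, d ∈ D ↔ d⁻¹ ∈ D) (g : G) :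
    ((D ×ˢ D).filter (fun p => p.1 * p.2 = g)).card = diffReps D g := by
  unfold diffReps
  apply Finset.card_nbij' (i := fun p => (p.1, p.2⁻¹)) (j := fun p => (p.1, p.2⁻¹))
  · intro p hp
    simp only [mem_coe] at hp ⊢
    rw [mem_filter, mem_product] at hp ⊢
    exact ⟨⟨hp.1.1, (hinv p.2).mp hp.1.2⟩, by simpa using hp.2⟩
  · intro p hp
    simp only [mem_coe] at hp ⊢
    rw [mem_filter, mem_product] at hp ⊢
    refine ⟨⟨hp.1.1, (hinv p.2).mp hp.1.2⟩, ?_⟩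
    simpa using hp.2
  · intro p _; simp
  · intro p _; simp

lemma prod_count_one (D : Finset G) (hinv : ∀ d : G, d ∈ D ↔ d⁻¹ ∈ D) :
    ((D ×ˢ D).filter (fun p => p.1 * p.2 = (1:G))).card = D.card := by
  apply Finset.card_nbij' (i := fun p => p.1) (j := fun a => (a, a⁻¹))
  · intro p hp
    rw [mem_coe, mem_filter, mem_product] at hp
    exact hp.1.1
  · intro a ha
    simp only [mem_coe]
    rw [mem_filter, mem_product]
    exact ⟨⟨ha, (hinv a).mp ha⟩, mul_inv_cancel a⟩
  · intro p hp
    rw [mem_coe, mem_filter, mem_product] at hp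
    have h2 : p.2 = p.1⁻¹ := eq_inv_of_mul_eq_one_right hp.2
    exact Prod.ext rfl h2.symm
  · intro a _; rfl

end Plumbing


lemma fiber_card {G : Type*} [CommGroup G] [Fintype G] (P : Subgroup G)
    [DecidableEq (G ⧸ P)] (hP : Nat.card P = 8) (y : G ⧸ P) :
    (univ.filter (fun g : G => (QuotientGroup.mk g : G ⧸ P) = y)).card = 8 := by
  classical
  obtain ⟨g₀, hg₀⟩ := QuotientGroup.mk_surjective y
  have key : (univ.filter (fun g : G => (QuotientGroup.mk g : G ⧸ P) = y)).card
      = (univ.filter (fun g : G => g ∈ P)).card := by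
    apply Finset.card_nbij' (i := fun g => g₀⁻¹ * g) (j := fun p => g₀ * p)
    · intro a ha
      simp only [mem_coe] at ha ⊢
      rw [mem_filter] at ha ⊢
      refine ⟨mem_univ _, ?_⟩
      rw [← QuotientGroup.eq_one_iff, QuotientGroup.mk_mul]
      rw [QuotientGroup.mk_inv, ha.2, hg₀]
      exact inv_mul_cancel y
    · intro a ha
      simp only [mem_coe] at ha ⊢
      rw [mem_filter] at ha ⊢
      refine ⟨mem_univ _, ?_⟩
      rw [QuotientGroup.mk_mul]
      rw [(QuotientGroup.eq_one_iff a).mpr ha.2, mul_one, hg₀]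
    · intro a _; beta_reduce; rw [mul_inv_cancel_left]
    · intro a _; beta_reduce; rw [inv_mul_cancel_left]
  rw [key, ← Fintype.card_subtype, ← Nat.card_eq_fintype_card]
  exact hP

section Plumbing2
variable {G : Type*} [CommGroup G] [Fintype G] [DecidableEq G]
variable (D : Finset G) (P : Subgroup G) [Fintype (G ⧸ P)] [DecidableEq (G ⧸ P)]

lemma conv_eq_prodcount (y : G ⧸ P) :
    ∑ x : G ⧸ P, (D.filter (fun g : G => (QuotientGroup.mk g : G ⧸ P) = x)).card
        * (D.filter (fun g : G => (QuotientGroup.mk g : G ⧸ P) = x⁻¹ * y)).card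
      = ((D ×ˢ D).filter (fun p => (QuotientGroup.mk (p.1 * p.2) : G ⧸ P) = y)).card := by
  rw [Finset.card_eq_sum_card_fiberwise
      (f := fun p : G × G => (QuotientGroup.mk p.1 : G ⧸ P)) (t := univ) (fun p _ => mem_univ _)]
  apply Finset.sum_congr rfl
  intro x _
  have hEq : ((D ×ˢ D).filter (fun p => (QuotientGroup.mk (p.1 * p.2) : G ⧸ P) = y)).filter
        (fun p => (QuotientGroup.mk p.1 : G ⧸ P) = x)
      = (D.filter (fun g : G => (QuotientGroup.mk g : G ⧸ P) = x)) ×ˢ (D.filter (fun g : G => (QuotientGroup.mk g : G ⧸ P) = x⁻¹ * y)) := by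
    ext p
    simp only [mem_filter, mem_product]
    constructor
    · rintro ⟨⟨⟨h1, h2⟩, h3⟩, h4⟩
      refine ⟨⟨h1, h4⟩, h2, ?_⟩
      rw [QuotientGroup.mk_mul] at h3
      rw [← h3, ← h4, inv_mul_cancel_left]
    · rintro ⟨⟨h1, h2⟩, h3, h4⟩
      refine ⟨⟨⟨h1, h3⟩, ?_⟩, h2⟩
      rw [QuotientGroup.mk_mul, h2, h4, mul_inv_cancel_left]
  rw [hEq, Finset.card_product]

lemma prodcount_eq_fibersum (y : G ⧸ P) :
    ((D ×ˢ D).filter (fun p => (QuotientGroup.mk (p.1 * p.2) : G ⧸ P) = y)).card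
      = ∑ g ∈ univ.filter (fun g : G => (QuotientGroup.mk g : G ⧸ P) = y),
          ((D ×ˢ D).filter (fun p => p.1 * p.2 = g)).card := by
  rw [Finset.card_eq_sum_card_fiberwise
      (f := fun p : G × G => p.1 * p.2)
      (t := univ.filter (fun g : G => (QuotientGroup.mk g : G ⧸ P) = y))
      (fun p hp => by
        simp only [mem_coe] at hp ⊢
        rw [mem_filter] at hp ⊢
        exact ⟨mem_univ _, hp.2⟩)]
  apply Finset.sum_congr rfl
  intro g hg
  rw [mem_filter] at hg
  congr 1
  ext p
  simp only [mem_filter, mem_product]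
  constructor
  · rintro ⟨⟨hD, _⟩, h⟩; exact ⟨hD, h⟩
  · rintro ⟨hD, h⟩
    exact ⟨⟨hD, by rw [h]; exact hg.2⟩, h⟩

end Plumbing2

section Plumbing3
variable {G : Type*} [CommGroup G] [Fintype G] [DecidableEq G]
variable (D : Finset G) (P : Subgroup G) [Fintype (G ⧸ P)] [DecidableEq (G ⧸ P)]

lemma fibersum_eval (hP : Nat.card P = 8) (hD40 : D.card = 40) (h1D : (1:G) ∉ D)
    (hinv : ∀ d : G, d ∈ D ↔ d⁻¹ ∈ D)
    (hreps : ∀ g : G, g ≠ 1 → (g ∈ D → diffReps D g = 4) ∧ (g ∉ D → diffReps D g = 8))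
    (y : G ⧸ P) :
    ∑ g ∈ univ.filter (fun g : G => (QuotientGroup.mk g : G ⧸ P) = y),
        (((D ×ˢ D).filter (fun p => p.1 * p.2 = g)).card : ℤ)
      = (if y = 1 then 32 else 0) + 64
        - 4 * ((D.filter (fun g : G => (QuotientGroup.mk g : G ⧸ P) = y)).card : ℤ) := by
  have hterm : ∀ g ∈ univ.filter (fun g : G => (QuotientGroup.mk g : G ⧸ P) = y),
      (((D ×ˢ D).filter (fun p => p.1 * p.2 = g)).card : ℤ)
        = (if g = 1 then 32 else 0) + 8 - (if g ∈ D then 4 else 0) := by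
    intro g _
    by_cases hg1 : g = 1
    · subst hg1
      rw [prod_count_one D hinv, hD40]
      simp [h1D]
    · rw [prod_count_eq_diffReps D hinv]
      by_cases hgD : g ∈ D
      · rw [(hreps g hg1).1 hgD]
        simp [hg1, hgD]
      · rw [(hreps g hg1).2 hgD]
        simp [hg1, hgD]
  rw [Finset.sum_congr rfl hterm]
  rw [Finset.sum_sub_distrib, Finset.sum_add_distrib]
  congr 1
  · congr 1
    · rw [Finset.sum_ite_eq' _ (1:G) (fun _ => (32:ℤ))]
      have hmem : ((1:G) ∈ univ.filter (fun g : G => (QuotientGroup.mk g : G ⧸ P) = y))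
          ↔ (y = 1) := by
        rw [mem_filter]
        constructor
        · rintro ⟨-, h⟩; rw [← h]; exact (QuotientGroup.mk_one P).symm
        · intro h; exact ⟨mem_univ _, by rw [h]; exact QuotientGroup.mk_one P⟩
      by_cases hy : y = 1
      · rw [if_pos (hmem.mpr hy), if_pos hy]
      · rw [if_neg (fun hc => hy (hmem.mp hc)), if_neg hy]
    · rw [Finset.sum_const, fiber_card P hP y]
      norm_num
  · rw [← Finset.sum_filter]
    rw [Finset.sum_const]
    have hset : (univ.filter (fun g : G => (QuotientGroup.mk g : G ⧸ P) = y)).filter (· ∈ D)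
        = D.filter (fun g : G => (QuotientGroup.mk g : G ⧸ P) = y) := by
      ext g
      simp only [mem_filter, mem_univ, true_and]
      tauto
    rw [hset]
    push_cast
    ring

lemma nd_symm (hinv : ∀ d : G, d ∈ D ↔ d⁻¹ ∈ D) (y : G ⧸ P) :
    (D.filter (fun g : G => (QuotientGroup.mk g : G ⧸ P) = y⁻¹)).card
      = (D.filter (fun g : G => (QuotientGroup.mk g : G ⧸ P) = y)).card := by
  apply Finset.card_nbij' (i := fun g => g⁻¹) (j := fun g => g⁻¹)
  · intro a ha
    simp only [mem_coe] at ha ⊢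
    rw [mem_filter] at ha ⊢
    refine ⟨(hinv a).mp ha.1, ?_⟩
    rw [QuotientGroup.mk_inv, ha.2, inv_inv]
  · intro a ha
    simp only [mem_coe] at ha ⊢
    rw [mem_filter] at ha ⊢
    refine ⟨(hinv a).mp ha.1, ?_⟩
    rw [QuotientGroup.mk_inv, ha.2]
  · intro a _; beta_reduce; rw [inv_inv]
  · intro a _; beta_reduce; rw [inv_inv]

end Plumbing3

lemma abstract_27 {Q : Type*} [CommGroup Q] [Fintype Q] [DecidableEq Q]
    (hQ : Fintype.card Q = 27) (d : Q → ℤ)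
    (hsym : ∀ y : Q, d y⁻¹ = d y)
    (hsum : ∑ x : Q, d x = 40)
    (hconv : ∀ y : Q, ∑ x : Q, d x * d (x⁻¹ * y) = (if y = 1 then 32 else 0) + 64 - 4 * d y) :
    False := by
  have hsq : Function.Injective (fun z : Q => z * z) := by
    intro z w h
    simp only at h
    have h1 : (z * w⁻¹) ^ 2 = 1 := by
      rw [mul_pow, pow_two, pow_two, h, ← pow_two, ← pow_two, ← mul_pow, mul_inv_cancel, one_pow]
    have h4 : orderOf (z * w⁻¹) = 1 :=
      Nat.eq_one_of_dvd_coprimes (show Nat.Coprime 2 27 by norm_num)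
        (orderOf_dvd_of_pow_eq_one h1) (by rw [← hQ]; exact orderOf_dvd_card)
    exact mul_inv_eq_one.mp (orderOf_eq_one_iff.mp h4)
  set h : Q → ℤ := fun y => 3 * d y + (if y = 1 then 6 else 0) - 4 with hdef
  have convh : ∀ y : Q, ∑ x : Q, h x * h (x⁻¹ * y) = if y = 1 then 324 else 0 :=
    fun y => claimA hQ d hsum hconv y
  -- h is even everywhere
  have heven : ∀ x : Q, (2:ℤ) ∣ h x := by
    intro x
    have := key_parity hsq h x
    rw [convh (x * x)] at this
    have h0 : (((if x * x = 1 then (324:ℤ) else 0) : ℤ) : ZMod 2) = 0 := by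
      by_cases hxx : x * x = 1 <;> simp [hxx] <;> decide
    rw [h0] at this
    have h2 : ((h x : ZMod 2)) = 0 := by
      have := this.symm
      revert this
      generalize (h x : ZMod 2) = a
      revert a; decide
    exact_mod_cast (ZMod.intCast_zmod_eq_zero_iff_dvd (h x) 2).mp h2
  choose k hk using heven
  have convk : ∀ y : Q, ∑ x : Q, k x * k (x⁻¹ * y) = if y = 1 then 81 else 0 := by
    intro y
    have h4 : (4:ℤ) * ∑ x : Q, k x * k (x⁻¹ * y) = 4 * (if y = 1 then 81 else 0) := by
      rw [Finset.mul_sum]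
      have : ∀ x : Q, (4:ℤ) * (k x * k (x⁻¹ * y)) = h x * h (x⁻¹ * y) := by
        intro x; rw [hk x, hk (x⁻¹ * y)]; ring
      rw [Finset.sum_congr rfl (fun x _ => this x), convh y]
      by_cases hy : y = 1 <;> simp [hy]
    exact mul_left_cancel₀ (by norm_num) h4
  -- k is even off identity
  have hkeven : ∀ x : Q, x ≠ 1 → (2:ℤ) ∣ k x := by
    intro x hx
    have := key_parity hsq k x
    rw [convk (x * x)] at this
    have hxx : x * x ≠ 1 := by
      intro hcon
      exact hx (hsq (show x * x = (1:Q) * 1 by rw [hcon, one_mul]))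
    rw [if_neg hxx] at this
    have h2 : ((k x : ZMod 2)) = 0 := by
      have := this.symm
      revert this
      generalize (k x : ZMod 2) = a
      revert a; decide
    exact_mod_cast (ZMod.intCast_zmod_eq_zero_iff_dvd (k x) 2).mp h2
  -- k symmetric
  have hksym : ∀ x : Q, k x⁻¹ = k x := by
    intro x
    have : (2:ℤ) * k x⁻¹ = 2 * k x := by
      rw [← hk, ← hk]
      simp only [hdef]
      rw [hsym x]
      congr 1
      simp [inv_eq_one]
    exact mul_left_cancel₀ (by norm_num) this
  -- sum of squares
  have hsq81 : ∑ x : Q, k x * k x = 81 := by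
    have := convk 1
    rw [if_pos rfl] at this
    rw [← this]
    apply Finset.sum_congr rfl
    intro x _
    rw [mul_one, hksym x]
  -- each off-identity square is ≥ 4
  have hge : ∀ x : Q, x ≠ 1 → (4:ℤ) ≤ k x * k x := by
    intro x hx
    obtain ⟨m, hm⟩ := hkeven x hx
    have hm0 : m ≠ 0 := by
      intro h0
      have : k x = 0 := by rw [hm, h0, mul_zero]
      have h2 : (2:ℤ) * k x = 3 * d x - 4 := by
        rw [← hk x]; simp only [hdef]; rw [if_neg hx]; ring
      rw [this, mul_zero] at h2
      omega
    have hm1 : (1:ℤ) ≤ m * m := by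
      have : m ≥ 1 ∨ m ≤ -1 := by omega
      rcases this with h | h <;> nlinarith
    rw [hm]
    nlinarith
  -- final counting
  have h1mem : (1:Q) ∈ (univ : Finset Q) := mem_univ 1
  have hsplit : ∑ x : Q, k x * k x
      = k 1 * k 1 + ∑ x ∈ univ.erase 1, k x * k x := by
    conv_lhs => rw [← Finset.insert_erase h1mem]
    rw [Finset.sum_insert (Finset.notMem_erase 1 univ)]
  have hcard : (univ.erase (1:Q)).card = 26 := by
    rw [Finset.card_erase_of_mem h1mem, card_univ, hQ]
  have hlb : (104:ℤ) ≤ ∑ x ∈ univ.erase 1, k x * k x := by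
    calc (104:ℤ) = (univ.erase (1:Q)).card • (4:ℤ) := by rw [hcard]; norm_num
    _ = ∑ _x ∈ univ.erase (1:Q), (4:ℤ) := (Finset.sum_const 4).symm
    _ ≤ ∑ x ∈ univ.erase 1, k x * k x := by
        apply Finset.sum_le_sum
        intro x hx
        exact hge x (Finset.mem_erase.mp hx).1
  have h0 : (0:ℤ) ≤ k 1 * k 1 := mul_self_nonneg _
  rw [hsplit] at hsq81
  linarith


theorem no_216_40_4_8_PDS (G : Type*) [CommGroup G] [Fintype G] [DecidableEq G]
    (hG : Fintype.card G = 216) :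
    ¬ ∃ D : Finset G, IsPDS D 216 40 4 8 ∧ IsRegularPDS D ∧ ¬ IsTrivialPDS D := by
  rintro ⟨D, ⟨-, hD40, hreps⟩, ⟨h1D, hinv⟩, -⟩
  classical
  haveI : Fact (Nat.Prime 2) := ⟨Nat.prime_two⟩
  obtain ⟨P, hP⟩ := Sylow.exists_subgroup_card_pow_prime (G := G) 2 (n := 3)
    (by rw [Nat.card_eq_fintype_card, hG]; norm_num)
  have hP8 : Nat.card P = 8 := by rw [hP]; norm_num
  letI : Fintype (G ⧸ P) := Fintype.ofFinite _
  letI : DecidableEq (G ⧸ P) := Classical.decEq _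
  have hQ27 : Fintype.card (G ⧸ P) = 27 := by
    have hc := Subgroup.card_eq_card_quotient_mul_card_subgroup P
    rw [Nat.card_eq_fintype_card (α := G), hG, hP8, Nat.card_eq_fintype_card] at hc
    omega
  set nd : G ⧸ P → ℕ :=
    fun y => (D.filter (fun g : G => (QuotientGroup.mk g : G ⧸ P) = y)).card with hnd
  have hndsum : ∑ y : G ⧸ P, nd y = 40 := by
    rw [← hD40]
    exact (Finset.card_eq_sum_card_fiberwise
      (f := fun g : G => (QuotientGroup.mk g : G ⧸ P)) (t := univ)
      (fun g _ => mem_univ _)).symm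
  apply abstract_27 hQ27 (fun y => (nd y : ℤ))
  · intro y
    exact_mod_cast congrArg (Nat.cast (R := ℤ)) (nd_symm D P hinv y)
  · rw [← Nat.cast_sum]
    exact_mod_cast congrArg (Nat.cast (R := ℤ)) hndsum
  · intro y
    have step1 : ∑ x : G ⧸ P, (nd x : ℤ) * (nd (x⁻¹ * y) : ℤ)
        = ((∑ x : G ⧸ P, nd x * nd (x⁻¹ * y) : ℕ) : ℤ) := by push_cast; rfl
    rw [step1, conv_eq_prodcount D P y, prodcount_eq_fibersum D P y, Nat.cast_sum]
    exact fibersum_eval D P hP8 hD40 h1D hinv hreps y
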